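/- For every real z with 0 < z < 1, e^{3z}/(e^z − 1)⁴ ≤ 3/z⁴; equivalently, e^{−z}/(1 − e^{−z})⁴ ≤ 3/z⁴. -/

import Mathlib

open Real

/-- For `0 < z < 1`, `e^{3z}/(e^z - 1)⁴ ≤ 3/z⁴`; equivalently `e^{-z}/(1 - e^{-z})⁴ ≤ 3/z⁴`. -/
theorem exp_inequality_three (z : ℝ) (hz : 0 < z) (hz' : z < 1) :
    Real.exp (3 * z) / (Real.exp z - 1) ^ 4 ≤ 3 / z ^ 4 ∧
      Real.exp (-z) / (1 - Real.exp (-z)) ^ 4 ≤ 3 / z ^ 4 := by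
  have hd : (0:ℝ) < Real.exp z - 1 := by
    have := Real.add_one_lt_exp hz.ne'
    linarith
  have hhalf : Real.exp (z/2) * Real.exp (z/2) = Real.exp z := by
    rw [← Real.exp_add]; ring_nf
  have hinv : Real.exp (-(z/2)) * Real.exp (z/2) = 1 := by
    rw [← Real.exp_add]; simp
  have h2 : Real.exp z - 1 = 2 * Real.sinh (z/2) * Real.exp (z/2) := by
    rw [Real.sinh_eq]; nlinarith [hhalf, hinv]
  have hsinh : z/2 < Real.sinh (z/2) := Real.self_lt_sinh_iff.mpr (by positivity)
  have hkey : z * Real.exp (z/2) ≤ Real.exp z - 1 := by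
    rw [h2]
    have := Real.exp_pos (z/2)
    nlinarith
  have hpow : (z * Real.exp (z/2)) ^ 4 ≤ (Real.exp z - 1) ^ 4 := by
    apply pow_le_pow_left₀ (by positivity) hkey
  have h2z : Real.exp (z/2) ^ 4 = Real.exp (2*z) := by
    rw [← Real.exp_nat_mul]; ring_nf
  have he3 : Real.exp (3*z) = Real.exp z * Real.exp (2*z) := by
    rw [← Real.exp_add]; ring_nf
  have hlt3 : Real.exp z < 3 := by
    calc Real.exp z < Real.exp 1 := Real.exp_lt_exp.mpr hz'
    _ < 2.7182818286 := Real.exp_one_lt_d9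
    _ < 3 := by norm_num
  have hmain : Real.exp (3*z) * z^4 ≤ 3 * (Real.exp z - 1)^4 := by
    have h1 : (z * Real.exp (z/2)) ^ 4 = z^4 * Real.exp (2*z) := by
      rw [mul_pow, h2z]
    have hE := Real.exp_pos (2*z)
    calc Real.exp (3*z) * z^4 = Real.exp z * (Real.exp (2*z) * z^4) := by rw [he3]; ring
    _ ≤ 3 * (Real.exp (2*z) * z^4) := by nlinarith [mul_pos hE (pow_pos hz 4)]
    _ ≤ 3 * (Real.exp z - 1)^4 := by nlinarith [hpow, h1]
  have hfirst : Real.exp (3 * z) / (Real.exp z - 1) ^ 4 ≤ 3 / z ^ 4 := by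
    rw [div_le_div_iff₀ (by positivity) (by positivity)]
    linarith [hmain]
  refine ⟨hfirst, ?_⟩
  have heq : Real.exp (-z) / (1 - Real.exp (-z)) ^ 4
      = Real.exp (3 * z) / (Real.exp z - 1) ^ 4 := by
    have h1 : 1 - Real.exp (-z) = Real.exp (-z) * (Real.exp z - 1) := by
      rw [mul_sub, ← Real.exp_add]; simp
    have h4 : Real.exp (-z) ^ 4 * Real.exp (3*z) = Real.exp (-z) := by
      rw [← Real.exp_nat_mul, ← Real.exp_add]; ring_nf
    have hdn : (0:ℝ) < 1 - Real.exp (-z) := by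
      rw [h1]; positivity
    rw [h1, mul_pow, eq_div_iff (by positivity)]
    field_simp
    have h5 : Real.exp (-z) ^ 3 * Real.exp (z*3) = 1 := by
      rw [← Real.exp_nat_mul, ← Real.exp_add, Real.exp_eq_one_iff]; push_cast; ring
    nlinarith [h4, pow_pos hd 4, Real.exp_pos (-z), h5]
  rw [heq]; exact hfirst
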